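/- Fix an integer n ≥ 2 and ε ∈ (0,1). Consider the one-directional two-period instance with I = {i₁,…,i_n}, J = {j₁,…,j_n}, K_ℓ = 1 for every user, first-period like probabilities φ¹_{i,j₁} = 1 for every i∈I and φ¹_{i,j_k} = 1−ε for every i∈I and every k ≥ 2, and second-period like probabilities φ²_{j,i} = 1 for every j∈J, i∈I. Let x^G ∈ {0,1}^{E⃗} have x^G_{i,j₁} = 1 for every i∈I and all other entries 0 (this is the local-greedy solution, since each man i's stand-alone expected match probability φ¹_{i,j}·φ²_{j,i} is uniquely maximized at j = j₁), and let x^* have x^*_{i_k,j_k} = 1 for k = 1,…,n and all other entries 0. Then M²(x^G) = 1 while M²(x^*) = 1 + (n−1)(1−ε); hence the local greedy policy attains only a fraction 1/(1 + (n−1)(1−ε)) of the optimal expected number of matches, which is O(1/n) for fixed ε. -/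

import Mathlib

open scoped Classical
noncomputable section

/-- The set of directed arcs between the two sides `I` and `J`. -/
abbrev Arc (I J : Type*) := (I × J) ⊕ (J × I)

/-- Reversal of a directed arc. -/
def arcRev {I J : Type*} : Arc I J → Arc I J
  | Sum.inl (i, j) => Sum.inr (j, i)
  | Sum.inr (j, i) => Sum.inl (i, j)

/-- Source (tail) of a directed arc. -/
def arcSrc {I J : Type*} : Arc I J → I ⊕ J
  | Sum.inl (i, _) => Sum.inl i
  | Sum.inr (j, _) => Sum.inr j

/-- Out-degree of a user in a set of arcs. -/
def outdegX {I J : Type*} (X : Finset (Arc I J)) (l : I ⊕ J) : ℕ :=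
  (X.filter fun a => arcSrc a = l).card

/-- Number of displayed unordered pairs containing a given user. -/
def wdeg {I J : Type*} (W : Finset (I × J)) : I ⊕ J → ℕ
  | Sum.inl i => (W.filter fun e => e.1 = i).card
  | Sum.inr j => (W.filter fun e => e.2 = j).card

/-- `max { ∑_{x ∈ S} φ x : S ⊆ s, |S| ≤ K }`. -/
def bestSum {α : Type*} (s : Finset α) (K : ℕ) (φ : α → ℝ) : ℝ :=
  (s.powerset.filter fun S => S.card ≤ K).sup' ⟨∅, by simp⟩ fun S => ∑ x ∈ S, φ x

/-- Backlog of a user `i ∈ I` in a set of arcs `B`. -/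
def backlogI {I J : Type*} [Fintype J] (B : Finset (Arc I J)) (i : I) : Finset J :=
  Finset.univ.filter fun j => Sum.inr (j, i) ∈ B

/-- Backlog of a user `j ∈ J` in a set of arcs `B`. -/
def backlogJ {I J : Type*} [Fintype I] (B : Finset (Arc I J)) (j : J) : Finset I :=
  Finset.univ.filter fun i => Sum.inl (i, j) ∈ B

/-- The second-period (sequential) value function `f`. -/
def fval {I J : Type*} [Fintype I] [Fintype J] (φ2 : Arc I J → ℝ) (K : I ⊕ J → ℕ)
    (B : Finset (Arc I J)) : ℝ :=
  (∑ i : I, bestSum (backlogI B i) (K (Sum.inl i)) fun j => φ2 (Sum.inl (i, j))) +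
  ∑ j : J, bestSum (backlogJ B j) (K (Sum.inr j)) fun i => φ2 (Sum.inr (j, i))

/-- Probability that the realized backlog is exactly `B`, given displayed arcs `x`. -/
def probOf {I J : Type*} [Fintype I] [Fintype J] (φ1 : Arc I J → ℝ)
    (x : Finset (Arc I J)) (B : Finset (Arc I J)) : ℝ :=
  (∏ a ∈ B, (if a ∈ x then φ1 a else 0)) *
    ∏ a ∈ Bᶜ, (1 - if a ∈ x then φ1 a else 0)

/-- Expected number of second-period (sequential) matches. -/
def M2 {I J : Type*} [Fintype I] [Fintype J] (φ1 φ2 : Arc I J → ℝ) (K : I ⊕ J → ℕ)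
    (x : Finset (Arc I J)) : ℝ :=
  ∑ B : Finset (Arc I J), fval φ2 K B * probOf φ1 x B

/-- First-period like probabilities of the hard instance for local greedy:
`φ¹_{i,j₁} = 1`, `φ¹_{i,j_k} = 1 - ε` for `k ≥ 2`, and zero on arcs from `J`. -/
def phi1g (n : ℕ) (ε : ℝ) : Arc (Fin n) (Fin n) → ℝ
  | Sum.inl (_, j) => if (j : ℕ) = 0 then 1 else 1 - ε
  | Sum.inr _ => 0

/-- Second-period like probabilities: `φ²_{j,i} = 1` for every `j ∈ J`, `i ∈ I`. -/
def phi2g (n : ℕ) : Arc (Fin n) (Fin n) → ℝ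
  | Sum.inl _ => 0
  | Sum.inr _ => 1


open Finset

section Bernoulli
variable {α : Type*} [Fintype α] [DecidableEq α]

def Pw (w : α → ℝ) (B : Finset α) : ℝ := (∏ a ∈ B, w a) * ∏ a ∈ Bᶜ, (1 - w a)

lemma sum_Pw (w : α → ℝ) : ∑ B : Finset α, Pw w B = 1 := by
  have h := Fintype.prod_add w (fun a => 1 - w a)
  simp only [add_sub_cancel, Finset.prod_const_one] at h
  exact h.symm

lemma sum_empty_inter_Pw (w : α → ℝ) (A : Finset α) :
    ∑ B : Finset α, (if B ∩ A = ∅ then (1:ℝ) else 0) * Pw w B = ∏ a ∈ A, (1 - w a) := by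
  classical
  have h1 : ∑ B : Finset α, (if B ∩ A = ∅ then (1:ℝ) else 0) * Pw w B
      = ∑ B ∈ Finset.univ.filter (fun B => B ∩ A = ∅), Pw w B := by
    rw [Finset.sum_filter]
    exact Finset.sum_congr rfl fun B _ => by by_cases h : B ∩ A = ∅ <;> simp [h]
  have h2 : Finset.univ.filter (fun B : Finset α => B ∩ A = ∅) = Aᶜ.powerset := by
    ext B
    simp only [mem_filter, mem_univ, true_and, mem_powerset]
    rw [Finset.eq_empty_iff_forall_notMem, Finset.subset_iff]
    constructor
    · intro h a haB
      simp only [mem_compl]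
      exact fun haA => h a (mem_inter.mpr ⟨haB, haA⟩)
    · intro h a haBA
      obtain ⟨haB, haA⟩ := mem_inter.mp haBA
      exact mem_compl.mp (h haB) haA
  rw [h1, h2]
  have key : ∀ B ∈ Aᶜ.powerset, Pw w B
      = ((∏ a ∈ B, w a) * ∏ a ∈ Aᶜ \ B, (1 - w a)) * ∏ a ∈ A, (1 - w a) := by
    intro B hB
    rw [mem_powerset] at hB
    have hBc : Bᶜ = (Aᶜ \ B) ∪ A := by
      ext a
      simp only [mem_compl, mem_union, mem_sdiff]
      constructor
      · intro ha
        by_cases h : a ∈ A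
        · exact Or.inr h
        · exact Or.inl ⟨h, ha⟩
      · rintro (⟨-, h⟩ | h)
        · exact h
        · exact fun hB' => (mem_compl.mp (hB hB')) h
    have hdisj : Disjoint (Aᶜ \ B) A :=
      Finset.disjoint_left.mpr fun a ha => mem_compl.mp (mem_sdiff.mp ha).1
    unfold Pw
    rw [hBc, Finset.prod_union hdisj]
    ring
  rw [Finset.sum_congr rfl key, ← Finset.sum_mul, ← Finset.prod_add]
  simp

lemma sum_nonempty_inter_Pw (w : α → ℝ) (A : Finset α) :
    ∑ B : Finset α, (if (B ∩ A).Nonempty then (1:ℝ) else 0) * Pw w B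
      = 1 - ∏ a ∈ A, (1 - w a) := by
  have h : ∀ B : Finset α, (if (B ∩ A).Nonempty then (1:ℝ) else 0)
      = 1 - if B ∩ A = ∅ then 1 else 0 := by
    intro B
    by_cases h : (B ∩ A).Nonempty
    · simp [h, Finset.nonempty_iff_ne_empty.mp h]
    · simp [h, Finset.not_nonempty_iff_eq_empty.mp h]
  simp only [h, sub_mul, one_mul, Finset.sum_sub_distrib, sum_Pw, sum_empty_inter_Pw]

end Bernoulli

lemma bestSum_zero {α : Type*} (s : Finset α) (K : ℕ) :
    bestSum s K (fun _ => (0:ℝ)) = 0 := by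
  unfold bestSum
  apply le_antisymm
  · exact Finset.sup'_le _ _ fun S _ => by simp
  · exact Finset.le_sup'_of_le _ (b := ∅) (by simp) (by simp)

lemma bestSum_one {α : Type*} [DecidableEq α] (s : Finset α) :
    bestSum s 1 (fun _ => (1:ℝ)) = if s.Nonempty then 1 else 0 := by
  unfold bestSum
  by_cases h : s.Nonempty
  · obtain ⟨a, ha⟩ := h
    rw [if_pos ⟨a, ha⟩]
    apply le_antisymm
    · apply Finset.sup'_le
      intro S hS
      simp only [mem_filter, mem_powerset] at hS
      simp only [Finset.sum_const, nsmul_eq_mul, mul_one]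
      exact_mod_cast hS.2
    · apply Finset.le_sup'_of_le _ (b := {a}) (by simp [Finset.singleton_subset_iff, ha]) (by simp)
  · rw [Finset.not_nonempty_iff_eq_empty] at h
    subst h
    simp [Finset.powerset_empty, Finset.filter_singleton]

lemma fval_eq (n : ℕ) (B : Finset (Arc (Fin n) (Fin n))) :
    fval (phi2g n) (fun _ => 1) B =
      ∑ j : Fin n, (if (B ∩ (Finset.univ.image fun i : Fin n =>
          (Sum.inl (i, j) : Arc (Fin n) (Fin n)))).Nonempty then (1:ℝ) else 0) := by
  unfold fval
  have h1 : ∀ i : Fin n, bestSum (backlogI B i) 1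
      (fun j => phi2g n (Sum.inl (i, j))) = 0 := by
    intro i
    have : (fun j : Fin n => phi2g n (Sum.inl (i, j))) = fun _ => (0:ℝ) := by
      funext j; rfl
    rw [this]
    exact bestSum_zero _ _
  rw [Finset.sum_congr rfl fun i _ => h1 i]
  simp only [Finset.sum_const_zero, zero_add]
  apply Finset.sum_congr rfl
  intro j _
  have h2 : (fun i : Fin n => phi2g n (Sum.inr (j, i))) = fun _ => (1:ℝ) := by
    funext i; rfl
  rw [h2, bestSum_one]
  congr 1
  · simp only [eq_iff_iff]
    unfold backlogJ
    constructor
    · rintro ⟨i, hi⟩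
      simp only [mem_filter, mem_univ, true_and] at hi
      exact ⟨Sum.inl (i, j), mem_inter.mpr ⟨hi, mem_image.mpr ⟨i, mem_univ i, rfl⟩⟩⟩
    · rintro ⟨a, ha⟩
      obtain ⟨haB, haA⟩ := mem_inter.mp ha
      obtain ⟨i, -, rfl⟩ := mem_image.mp haA
      exact ⟨i, by simpa using haB⟩

lemma M2_formula (n : ℕ) (φ1 : Arc (Fin n) (Fin n) → ℝ) (x : Finset (Arc (Fin n) (Fin n))) :
    M2 φ1 (phi2g n) (fun _ => 1) x =
      ∑ j : Fin n, (1 - ∏ i : Fin n,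
        (1 - if (Sum.inl (i, j) : Arc (Fin n) (Fin n)) ∈ x then φ1 (Sum.inl (i, j)) else 0)) := by
  unfold M2
  have hp : ∀ B, probOf φ1 x B = Pw (fun a => if a ∈ x then φ1 a else 0) B := fun B => by
    unfold probOf Pw
    congr!
  simp only [hp, fval_eq, Finset.sum_mul]
  rw [Finset.sum_comm]
  apply Finset.sum_congr rfl
  intro j _
  rw [sum_nonempty_inter_Pw (fun a => if a ∈ x then φ1 a else 0)
    (Finset.univ.image fun i : Fin n => (Sum.inl (i, j) : Arc (Fin n) (Fin n)))]
  congr 1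
  rw [Finset.prod_image (fun a _ b _ h => by simpa using h)]

lemma M2_greedy (n : ℕ) (hn : 2 ≤ n) (ε : ℝ) :
    M2 (phi1g n ε) (phi2g n) (fun _ => 1)
        (Finset.univ.image fun i : Fin n =>
          (Sum.inl (i, ⟨0, Nat.lt_of_lt_of_le (Nat.succ_pos 1) hn⟩) : Arc (Fin n) (Fin n))) = 1 := by
  rw [M2_formula]
  set z : Fin n := ⟨0, Nat.lt_of_lt_of_le (Nat.succ_pos 1) hn⟩ with hz
  have key : ∀ j : Fin n,
      (1 - ∏ i : Fin n, (1 - if (Sum.inl (i, j) : Arc (Fin n) (Fin n)) ∈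
            (Finset.univ.image fun i : Fin n => (Sum.inl (i, z) : Arc (Fin n) (Fin n)))
          then phi1g n ε (Sum.inl (i, j)) else 0))
        = if j = z then 1 else 0 := by
    intro j
    by_cases hj : j = z
    · subst hj
      rw [if_pos rfl]
      have hfac : (1 - if (Sum.inl (z, z) : Arc (Fin n) (Fin n)) ∈
            (Finset.univ.image fun i : Fin n => (Sum.inl (i, z) : Arc (Fin n) (Fin n)))
          then phi1g n ε (Sum.inl (z, z)) else 0) = 0 := by
        rw [if_pos (Finset.mem_image.mpr ⟨z, Finset.mem_univ _, rfl⟩)]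
        have : phi1g n ε (Sum.inl (z, z)) = 1 := by simp [phi1g, hz]
        rw [this]; ring
      rw [Finset.prod_eq_zero (Finset.mem_univ z) hfac]
      ring
    · rw [if_neg hj]
      have hfac : ∀ i : Fin n, i ∈ (Finset.univ : Finset (Fin n)) →
          (1 - if (Sum.inl (i, j) : Arc (Fin n) (Fin n)) ∈
            (Finset.univ.image fun i : Fin n => (Sum.inl (i, z) : Arc (Fin n) (Fin n)))
          then phi1g n ε (Sum.inl (i, j)) else 0) = 1 := by
        intro i _
        rw [if_neg, sub_zero]
        intro hmem
        obtain ⟨i', -, heq⟩ := Finset.mem_image.mp hmem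
        simp only [Sum.inl.injEq, Prod.mk.injEq] at heq
        exact hj heq.2.symm
      rw [Finset.prod_congr rfl hfac, Finset.prod_const_one]
      ring
  rw [Finset.sum_congr rfl fun j _ => key j, Finset.sum_ite_eq' Finset.univ z fun _ => (1:ℝ)]
  simp

lemma M2_star (n : ℕ) (hn : 2 ≤ n) (ε : ℝ) :
    M2 (phi1g n ε) (phi2g n) (fun _ => 1)
        (Finset.univ.image fun k : Fin n => (Sum.inl (k, k) : Arc (Fin n) (Fin n)))
      = 1 + ((n : ℝ) - 1) * (1 - ε) := by
  rw [M2_formula]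
  have key : ∀ j : Fin n,
      (1 - ∏ i : Fin n, (1 - if (Sum.inl (i, j) : Arc (Fin n) (Fin n)) ∈
            (Finset.univ.image fun k : Fin n => (Sum.inl (k, k) : Arc (Fin n) (Fin n)))
          then phi1g n ε (Sum.inl (i, j)) else 0))
        = if (j : ℕ) = 0 then 1 else 1 - ε := by
    intro j
    have hprod : ∏ i : Fin n, (1 - if (Sum.inl (i, j) : Arc (Fin n) (Fin n)) ∈
            (Finset.univ.image fun k : Fin n => (Sum.inl (k, k) : Arc (Fin n) (Fin n)))
          then phi1g n ε (Sum.inl (i, j)) else 0)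
        = 1 - phi1g n ε (Sum.inl (j, j)) := by
      rw [Finset.prod_eq_single j]
      · rw [if_pos (Finset.mem_image.mpr ⟨j, Finset.mem_univ _, rfl⟩)]
      · intro i _ hij
        rw [if_neg, sub_zero]
        intro hmem
        obtain ⟨k, -, heq⟩ := Finset.mem_image.mp hmem
        simp only [Sum.inl.injEq, Prod.mk.injEq] at heq
        exact hij (heq.1.symm.trans heq.2)
      · intro h
        exact absurd (Finset.mem_univ j) h
    rw [hprod]
    have : phi1g n ε (Sum.inl (j, j)) = if (j : ℕ) = 0 then 1 else 1 - ε := rfl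
    rw [this]
    by_cases hj : (j : ℕ) = 0 <;> simp [hj]
  rw [Finset.sum_congr rfl fun j _ => key j]
  have hsplit : ∀ j : Fin n, (if (j : ℕ) = 0 then (1:ℝ) else 1 - ε)
      = (1 - ε) + if j = (⟨0, Nat.lt_of_lt_of_le (Nat.succ_pos 1) hn⟩ : Fin n) then ε else 0 := by
    intro j
    by_cases hj : (j : ℕ) = 0
    · rw [if_pos hj, if_pos (Fin.ext hj)]; ring
    · rw [if_neg hj, if_neg (fun h => hj (by rw [h]))]; ring
  rw [Finset.sum_congr rfl fun j _ => hsplit j, Finset.sum_add_distrib,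
    Finset.sum_const, Finset.sum_ite_eq' Finset.univ _ fun _ => ε]
  simp only [Finset.mem_univ, if_true, Finset.card_univ, Fintype.card_fin, nsmul_eq_mul]
  ring

theorem localGreedy_worst_case' (n : ℕ) (hn : 2 ≤ n) (ε : ℝ) (hε0 : 0 < ε) (hε1 : ε < 1) :
    (∀ i k : Fin n, (k : ℕ) ≠ 0 →
        phi1g n ε (Sum.inl (i, k)) * phi2g n (Sum.inr (k, i)) <
          phi1g n ε (Sum.inl (i, ⟨0, Nat.lt_of_lt_of_le (Nat.succ_pos 1) hn⟩)) *
            phi2g n (Sum.inr (⟨0, Nat.lt_of_lt_of_le (Nat.succ_pos 1) hn⟩, i))) ∧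
    M2 (phi1g n ε) (phi2g n) (fun _ => 1)
        (Finset.univ.image fun i : Fin n =>
          (Sum.inl (i, ⟨0, Nat.lt_of_lt_of_le (Nat.succ_pos 1) hn⟩) : Arc (Fin n) (Fin n))) = 1 ∧
    M2 (phi1g n ε) (phi2g n) (fun _ => 1)
        (Finset.univ.image fun k : Fin n => (Sum.inl (k, k) : Arc (Fin n) (Fin n))) =
      1 + ((n : ℝ) - 1) * (1 - ε) ∧
    M2 (phi1g n ε) (phi2g n) (fun _ => 1)
        (Finset.univ.image fun i : Fin n =>
          (Sum.inl (i, ⟨0, Nat.lt_of_lt_of_le (Nat.succ_pos 1) hn⟩) : Arc (Fin n) (Fin n))) /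
      M2 (phi1g n ε) (phi2g n) (fun _ => 1)
        (Finset.univ.image fun k : Fin n => (Sum.inl (k, k) : Arc (Fin n) (Fin n))) =
      1 / (1 + ((n : ℝ) - 1) * (1 - ε)) := by
  have h2 := M2_greedy n hn ε
  have h3 := M2_star n hn ε
  refine ⟨?_, h2, h3, ?_⟩
  · intro i k hk
    have hL : phi1g n ε (Sum.inl (i, k)) = 1 - ε := by simp [phi1g, hk]
    have hR : phi1g n ε (Sum.inl (i, (⟨0, Nat.lt_of_lt_of_le (Nat.succ_pos 1) hn⟩ : Fin n))) = 1 := by simp [phi1g]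
    have h2g : ∀ p : Fin n × Fin n, phi2g n (Sum.inr p) = 1 := fun p => rfl
    rw [hL, hR, h2g, h2g]
    linarith
  · rw [h2, h3]

/-- local greedy obtains 1 expected match, while the optimal assignment
obtains `1 + (n-1)(1-ε)`; hence local greedy attains only a `1/(1+(n-1)(1-ε))`
fraction of the optimum. -/
theorem localGreedy_worst_case (n : ℕ) (hn : 2 ≤ n) (ε : ℝ) (hε0 : 0 < ε) (hε1 : ε < 1) :
    (∀ i k : Fin n, (k : ℕ) ≠ 0 →
        phi1g n ε (Sum.inl (i, k)) * phi2g n (Sum.inr (k, i)) <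
          phi1g n ε (Sum.inl (i, ⟨0, by omega⟩)) *
            phi2g n (Sum.inr (⟨0, by omega⟩, i))) ∧
    M2 (phi1g n ε) (phi2g n) (fun _ => 1)
        (Finset.univ.image fun i : Fin n =>
          (Sum.inl (i, ⟨0, by omega⟩) : Arc (Fin n) (Fin n))) = 1 ∧
    M2 (phi1g n ε) (phi2g n) (fun _ => 1)
        (Finset.univ.image fun k : Fin n => (Sum.inl (k, k) : Arc (Fin n) (Fin n))) =
      1 + ((n : ℝ) - 1) * (1 - ε) ∧
    M2 (phi1g n ε) (phi2g n) (fun _ => 1)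
        (Finset.univ.image fun i : Fin n =>
          (Sum.inl (i, ⟨0, by omega⟩) : Arc (Fin n) (Fin n))) /
      M2 (phi1g n ε) (phi2g n) (fun _ => 1)
        (Finset.univ.image fun k : Fin n => (Sum.inl (k, k) : Arc (Fin n) (Fin n))) =
      1 / (1 + ((n : ℝ) - 1) * (1 - ε)) := by
  exact localGreedy_worst_case' n hn ε hε0 hε1
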